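/- For the Dueck broadcast channel with input (X0,X1,X2) ∈ {0,1}^3, outputs Y=(X0, X1⊕N) and Z=(X0, X2⊕N) where N~Bernoulli(1/2) is independent of the input, the maximum over input distributions P_{X0X1X2} of I(X0X1; Y) equals 1 bit; i.e., without feedback no information can be carried through X1 beyond the clean bit X0. -/

import Mathlib

open scoped BigOperators

variable {Ω : Type*} [Fintype Ω]

/-- Probability mass of the event `X = a` under the weight function `μ`. -/
noncomputable def pm (μ : Ω → ℝ) {α : Type*} [Fintype α] [DecidableEq α]
    (X : Ω → α) (a : α) : ℝ := ∑ ω, if X ω = a then μ ω else 0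

/-- Shannon entropy (in bits) of a discrete random variable `X`. -/
noncomputable def ent (μ : Ω → ℝ) {α : Type*} [Fintype α] [DecidableEq α]
    (X : Ω → α) : ℝ := -∑ a, pm μ X a * Real.logb 2 (pm μ X a)

/-- Mutual information (in bits) between `X` and `Y`. -/
noncomputable def mi (μ : Ω → ℝ) {α β : Type*} [Fintype α] [DecidableEq α]
    [Fintype β] [DecidableEq β] (X : Ω → α) (Y : Ω → β) : ℝ :=
  ent μ X + ent μ Y - ent μ (fun ω => (X ω, Y ω))

/-- Conditional mutual information `I(X;Y|Z)` (in bits). -/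
noncomputable def condMI (μ : Ω → ℝ) {α β γ : Type*} [Fintype α] [DecidableEq α]
    [Fintype β] [DecidableEq β] [Fintype γ] [DecidableEq γ]
    (X : Ω → α) (Y : Ω → β) (Z : Ω → γ) : ℝ :=
  ent μ (fun ω => (X ω, Z ω)) + ent μ (fun ω => (Y ω, Z ω))
    - ent μ (fun ω => (X ω, Y ω, Z ω)) - ent μ Z

/-- `μ` is a probability weight function. -/
def IsProb (μ : Ω → ℝ) : Prop := (∀ ω, 0 ≤ μ ω) ∧ ∑ ω, μ ω = 1

/- ### Auxiliary lemmas -/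

lemma my_pm_nonneg {μ : Ω → ℝ} (hμ : ∀ ω, 0 ≤ μ ω) {α : Type*} [Fintype α] [DecidableEq α]
    (X : Ω → α) (a : α) : 0 ≤ pm μ X a :=
  Finset.sum_nonneg fun ω _ => by split <;> simp [hμ ω]

lemma my_pm_sum {μ : Ω → ℝ} {α : Type*} [Fintype α] [DecidableEq α] (X : Ω → α) :
    ∑ a, pm μ X a = ∑ ω, μ ω := by
  unfold pm
  rw [Finset.sum_comm]
  simp [Finset.sum_ite_eq]

lemma my_ent_comp_inj {μ : Ω → ℝ} {α β : Type*} [Fintype α] [DecidableEq α]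
    [Fintype β] [DecidableEq β] {f : α → β} (hf : Function.Injective f) (X : Ω → α) :
    ent μ (fun ω => f (X ω)) = ent μ X := by
  have hpm : ∀ a, pm μ (fun ω => f (X ω)) (f a) = pm μ X a := by
    intro a; unfold pm; apply Finset.sum_congr rfl; intro ω _
    simp [hf.eq_iff]
  have hzero : ∀ b, b ∉ Finset.univ.image f → pm μ (fun ω => f (X ω)) b = 0 := by
    intro b hb
    apply Finset.sum_eq_zero; intro ω _
    rw [if_neg]; intro h; exact hb (Finset.mem_image.2 ⟨X ω, Finset.mem_univ _, h⟩)
  unfold ent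
  congr 1
  rw [← Finset.sum_subset (Finset.subset_univ (Finset.univ.image f))
    (fun b _ hb => by rw [hzero b hb]; simp),
    Finset.sum_image (fun a _ a' _ h => hf h)]
  exact Finset.sum_congr rfl fun a _ => by rw [hpm]

lemma my_ent_pair_indep {μ : Ω → ℝ} {α β : Type*} [Fintype α] [DecidableEq α]
    [Fintype β] [DecidableEq β] (W : Ω → α) (N : Ω → β)
    (hW : ∑ a, pm μ W a = 1) (hN : ∑ b, pm μ N b = 1)
    (hind : ∀ a b, pm μ (fun ω => (W ω, N ω)) (a, b) = pm μ W a * pm μ N b) :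
    ent μ (fun ω => (W ω, N ω)) = ent μ W + ent μ N := by
  unfold ent
  rw [Fintype.sum_prod_type]
  have key : ∀ a b, pm μ (fun ω => (W ω, N ω)) (a, b)
        * Real.logb 2 (pm μ (fun ω => (W ω, N ω)) (a, b))
      = pm μ N b * (pm μ W a * Real.logb 2 (pm μ W a))
        + pm μ W a * (pm μ N b * Real.logb 2 (pm μ N b)) := by
    intro a b
    rw [hind]
    by_cases ha : pm μ W a = 0
    · simp [ha]
    by_cases hb : pm μ N b = 0
    · simp [hb]
    rw [Real.logb_mul ha hb]; ring
  calc -∑ a, ∑ b, pm μ (fun ω => (W ω, N ω)) (a, b)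
        * Real.logb 2 (pm μ (fun ω => (W ω, N ω)) (a, b))
      = -∑ a, ∑ b, (pm μ N b * (pm μ W a * Real.logb 2 (pm μ W a))
        + pm μ W a * (pm μ N b * Real.logb 2 (pm μ N b))) := by
        congr 1; exact Finset.sum_congr rfl fun a _ =>
          Finset.sum_congr rfl fun b _ => key a b
    _ = -((∑ a, pm μ W a * Real.logb 2 (pm μ W a)) * (∑ b, pm μ N b)
        + (∑ a, pm μ W a) * (∑ b, pm μ N b * Real.logb 2 (pm μ N b))) := by
        simp only [Finset.sum_add_distrib, ← Finset.mul_sum, ← Finset.sum_mul]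
        ring
    _ = _ := by rw [hW, hN]; ring

lemma my_ent_le_logb_card {μ : Ω → ℝ} {α : Type*} [Fintype α] [DecidableEq α]
    (X : Ω → α) (h0 : ∀ a, 0 ≤ pm μ X a) (h1 : ∑ a, pm μ X a = 1) :
    ent μ X ≤ Real.logb 2 (Fintype.card α) := by
  have hcard : 0 < Fintype.card α := by
    by_contra h
    have : Fintype.card α = 0 := by omega
    have : (Finset.univ : Finset α) = ∅ := Finset.univ_eq_empty_iff.2 (by
      rwa [← Fintype.card_eq_zero_iff])
    rw [this] at h1; simp at h1
  set n : ℝ := (Fintype.card α : ℝ) with hn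
  have hnpos : (0:ℝ) < n := by rw [hn]; exact_mod_cast hcard
  have key : ∀ a, -(pm μ X a * Real.log (pm μ X a))
      ≤ pm μ X a * Real.log n + (1/n - pm μ X a) := by
    intro a
    rcases eq_or_lt_of_le (h0 a) with h | h
    · rw [← h]; simp; positivity
    · have hx : (0:ℝ) < 1 / (n * pm μ X a) := by positivity
      have := Real.log_le_sub_one_of_pos hx
      have hlog : Real.log (1 / (n * pm μ X a))
          = -(Real.log n + Real.log (pm μ X a)) := by
        rw [one_div, Real.log_inv, Real.log_mul (ne_of_gt hnpos) (ne_of_gt h)]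
      rw [hlog] at this
      have hm := mul_le_mul_of_nonneg_left this (le_of_lt h)
      have hp : pm μ X a ≠ 0 := ne_of_gt h
      have hn' : n ≠ 0 := ne_of_gt hnpos
      have he : pm μ X a * (1 / (n * pm μ X a) - 1) = 1 / n - pm μ X a := by
        field_simp
      have he2 : pm μ X a * -(Real.log n + Real.log (pm μ X a))
          = -(pm μ X a * Real.log n) - pm μ X a * Real.log (pm μ X a) := by ring
      linarith
  have hsum : ∑ a, -(pm μ X a * Real.log (pm μ X a))
      ≤ (∑ a, pm μ X a) * Real.log n + (Fintype.card α * (1/n) - ∑ a, pm μ X a) := by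
    calc ∑ a, -(pm μ X a * Real.log (pm μ X a))
        ≤ ∑ a, (pm μ X a * Real.log n + (1/n - pm μ X a)) :=
          Finset.sum_le_sum fun a _ => key a
      _ = (∑ a, pm μ X a) * Real.log n + (Fintype.card α * (1/n) - ∑ a, pm μ X a) := by
          rw [Finset.sum_add_distrib, Finset.sum_mul]
          congr 1
          rw [Finset.sum_sub_distrib]
          simp [Finset.card_univ, mul_comm]
  rw [h1] at hsum
  have hsum2 : ∑ a, -(pm μ X a * Real.log (pm μ X a)) ≤ Real.log n := by
    have : (Fintype.card α : ℝ) * (1/n) = 1 := by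
      field_simp
      exact hn.symm
    linarith [hsum, this.le, this.ge]
  have hlog2 : (0:ℝ) < Real.log 2 := Real.log_pos (by norm_num)
  unfold ent
  have : -∑ a, pm μ X a * Real.logb 2 (pm μ X a)
      = (∑ a, -(pm μ X a * Real.log (pm μ X a))) / Real.log 2 := by
    rw [Finset.sum_div, ← Finset.sum_neg_distrib]
    apply Finset.sum_congr rfl; intro a _
    rw [Real.logb]; ring
  rw [this, Real.logb]
  exact div_le_div_of_nonneg_right hsum2 hlog2.le

lemma my_logb_half : Real.logb 2 (1/2 : ℝ) = -1 := by
  rw [one_div, Real.logb_inv, Real.logb_self_eq_one] <;> norm_num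

theorem dueck_no_feedback_max_one :
    (∀ (Ω : Type) [Fintype Ω] (μ : Ω → ℝ) (X0 X1 X2 N : Ω → Bool),
      IsProb μ →
      (∀ a b c n : Bool,
        pm μ (fun ω => (X0 ω, X1 ω, X2 ω, N ω)) (a, b, c, n)
          = pm μ (fun ω => (X0 ω, X1 ω, X2 ω)) (a, b, c) * pm μ N n) →
      pm μ N true = 1 / 2 →
      mi μ (fun ω => (X0 ω, X1 ω))
        (fun ω => (X0 ω, Bool.xor (X1 ω) (N ω))) ≤ 1) ∧
    (∃ (μ : Bool × Bool × Bool × Bool → ℝ)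
       (X0 X1 X2 N : Bool × Bool × Bool × Bool → Bool),
      IsProb μ ∧
      (∀ a b c n : Bool,
        pm μ (fun ω => (X0 ω, X1 ω, X2 ω, N ω)) (a, b, c, n)
          = pm μ (fun ω => (X0 ω, X1 ω, X2 ω)) (a, b, c) * pm μ N n) ∧
      pm μ N true = 1 / 2 ∧
      mi μ (fun ω => (X0 ω, X1 ω))
        (fun ω => (X0 ω, Bool.xor (X1 ω) (N ω))) = 1) := by
  constructor
  · intro Ω' _ μ X0 X1 X2 N hμ hind hN
    obtain ⟨hμ0, hμ1⟩ := hμ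
    -- marginalization lemmas
    have marg1 : ∀ a b n, pm μ (fun ω => ((X0 ω, X1 ω), N ω)) ((a, b), n)
        = ∑ c, pm μ (fun ω => (X0 ω, X1 ω, X2 ω, N ω)) (a, b, c, n) := by
      intro a b n
      unfold pm
      rw [Finset.sum_comm]
      apply Finset.sum_congr rfl; intro ω _
      cases hc : X2 ω <;> simp [Fintype.sum_bool, Prod.ext_iff, hc, and_assoc]
    have marg2 : ∀ a b, pm μ (fun ω => (X0 ω, X1 ω)) (a, b)
        = ∑ c, pm μ (fun ω => (X0 ω, X1 ω, X2 ω)) (a, b, c) := by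
      intro a b
      unfold pm
      rw [Finset.sum_comm]
      apply Finset.sum_congr rfl; intro ω _
      cases hc : X2 ω <;> simp [Fintype.sum_bool, Prod.ext_iff, hc, and_assoc]
    have hindW : ∀ (w : Bool × Bool) (n : Bool),
        pm μ (fun ω => ((X0 ω, X1 ω), N ω)) (w, n)
          = pm μ (fun ω => (X0 ω, X1 ω)) w * pm μ N n := by
      rintro ⟨a, b⟩ n
      rw [marg1, marg2, Finset.sum_mul]
      exact Finset.sum_congr rfl fun c _ => hind a b c n
    -- pm sums
    have hWsum : ∑ w, pm μ (fun ω => (X0 ω, X1 ω)) w = 1 := by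
      rw [my_pm_sum, hμ1]
    have hNsum : ∑ b, pm μ N b = 1 := by rw [my_pm_sum, hμ1]
    have hNf : pm μ N false = 1/2 := by
      have := hNsum
      rw [Fintype.sum_bool, hN] at this
      linarith
    have hentN : ent μ N = 1 := by
      unfold ent
      rw [Fintype.sum_bool, hN, hNf, my_logb_half]
      norm_num
    -- entropy of the joint via injection
    have hfinj : Function.Injective
        (fun p : (Bool × Bool) × Bool => (p.1, (p.1.1, Bool.xor p.1.2 p.2))) := by
      decide
    have hjoint : ent μ (fun ω => ((X0 ω, X1 ω), (X0 ω, Bool.xor (X1 ω) (N ω))))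
        = ent μ (fun ω => ((X0 ω, X1 ω), N ω)) :=
      my_ent_comp_inj hfinj (fun ω => ((X0 ω, X1 ω), N ω))
    have hpair : ent μ (fun ω => ((X0 ω, X1 ω), N ω))
        = ent μ (fun ω => (X0 ω, X1 ω)) + ent μ N :=
      my_ent_pair_indep _ _ hWsum hNsum hindW
    -- entropy of Y bounded by 2
    have hY : ent μ (fun ω => (X0 ω, Bool.xor (X1 ω) (N ω))) ≤ 2 := by
      have := my_ent_le_logb_card (μ := μ) (fun ω => (X0 ω, Bool.xor (X1 ω) (N ω)))
        (my_pm_nonneg hμ0 _) (by rw [my_pm_sum, hμ1])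
      have hc : (Fintype.card (Bool × Bool) : ℝ) = 4 := by simp
      rw [hc] at this
      have h4 : Real.logb 2 (4:ℝ) = 2 := by
        rw [show (4:ℝ) = 2^(2:ℕ) by norm_num, Real.logb_pow, Real.logb_self_eq_one] <;>
          norm_num
      linarith [this, h4.le, h4.ge]
    unfold mi
    rw [hjoint, hpair, hentN]
    linarith
  · refine ⟨fun p => if p.2.1 = false ∧ p.2.2.1 = false then (1:ℝ)/4 else 0,
      fun p => p.1, fun p => p.2.1, fun p => p.2.2.1, fun p => p.2.2.2, ?_, ?_, ?_, ?_⟩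
    · constructor
      · intro ω; dsimp only; split <;> norm_num
      · simp [Fintype.sum_prod_type, Fintype.sum_bool]
        norm_num
    · intro a b c n
      cases a <;> cases b <;> cases c <;> cases n <;>
        norm_num [pm, Fintype.sum_prod_type, Fintype.sum_bool]
    · simp [pm, Fintype.sum_prod_type, Fintype.sum_bool]
      norm_num
    · have l2 : Real.logb 2 ((2:ℝ)⁻¹) = -1 := by
        rw [Real.logb_inv, Real.logb_self_eq_one] <;> norm_num
      have l4 : Real.logb 2 ((4:ℝ)⁻¹) = -2 := by
        rw [Real.logb_inv, show (4:ℝ) = 2^(2:ℕ) by norm_num, Real.logb_pow,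
          Real.logb_self_eq_one] <;> norm_num
      simp [mi, ent, pm, Fintype.sum_prod_type, Fintype.sum_bool]
      norm_num [l2, l4, my_logb_half]
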